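/- The binomial collection γ̃ defined by γ̃_{n,n'} = Σ_{j=0}^{n} C(n', j) e_{n'-j} for n' ∈ ℕ₊ and n ∈ {0, …, n'} satisfies the bound condition, i.e. γ̃ ∈ Γ. -/

import Mathlib

open Matrix

noncomputable def relu {n n' : ℕ} (W : Matrix (Fin n') (Fin n) ℝ) (b : Fin n' → ℝ)
    (x : Fin n → ℝ) : Fin n' → ℝ :=
  fun i => max 0 (W i ⬝ᵥ x + b i)

noncomputable def sig {n n' : ℕ} (W : Matrix (Fin n') (Fin n) ℝ) (b : Fin n' → ℝ)
    (x : Fin n → ℝ) : Fin n' → Bool :=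
  fun i => decide (0 < W i ⬝ᵥ x + b i)

/-- Forward pass through the first `l` layers: `fwd n W b l = h_l ∘ ⋯ ∘ h_1`. -/
noncomputable def fwd (n : ℕ → ℕ) (W : ∀ l : ℕ, Matrix (Fin (n (l + 1))) (Fin (n l)) ℝ)
    (b : ∀ l : ℕ, Fin (n (l + 1)) → ℝ) : (l : ℕ) → (Fin (n 0) → ℝ) → (Fin (n l) → ℝ)
  | 0 => fun x => x
  | l + 1 => fun x => relu (W l) (b l) (fwd n W b l x)

/-- Multi signature of length `m`:
`msig n W b m x = (S_{h_1}(x), S_{h_2}(h_1(x)), …, S_{h_m}(h_{m-1}∘⋯∘h_1(x)))`. -/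
noncomputable def msig (n : ℕ → ℕ) (W : ∀ l : ℕ, Matrix (Fin (n (l + 1))) (Fin (n l)) ℝ)
    (b : ∀ l : ℕ, Fin (n (l + 1)) → ℝ) (m : ℕ) (x : Fin (n 0) → ℝ) :
    ∀ l : Fin m, Fin (n (l.val + 1)) → Bool :=
  fun l => sig (W l.val) (b l.val) (fwd n W b l.val x)

/-- Number of active units of a binary vector `s`, i.e. `|s|`. -/
def cnt {k : ℕ} (s : Fin k → Bool) : ℕ := (Finset.univ.filter fun j => s j = true).card

/-- `min(n_0, |s_1|, …, |s_i|)` for a length-`i` multi signature `s`. -/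
def minAct (n : ℕ → ℕ) (i : ℕ) (s : ∀ l : Fin i, Fin (n (l.val + 1)) → Bool) : ℕ :=
  Finset.univ.fold min (n 0) (fun l : Fin i => cnt (s l))


/-- Tail sum `∑_{j ≥ J} v j` of a histogram. -/
noncomputable def tailSum (v : ℕ → ℕ) (J : ℕ) : ℕ :=
  ∑' j : ℕ, if J ≤ j then v j else 0

/-- The partial order `≼` on histograms: `v ≼ w` iff all tail sums of `v` are dominated by
those of `w`. -/
def hle (v w : ℕ → ℕ) : Prop := ∀ J : ℕ, tailSum v J ≤ tailSum w J

/-- The histogram `e_i` with a single entry `1` at index `i`. -/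
def histE (i : ℕ) : ℕ → ℕ := fun j => if j = i then 1 else 0

/-- The activation histogram `ℋ_{n'}(𝒮)`: entry `j` counts the signatures `s ∈ 𝒮` with
`|s| = j` active units. -/
noncomputable def actHist (n' : ℕ) (S : Set (Fin n' → Bool)) : ℕ → ℕ :=
  fun j => {s ∈ S | cnt s = j}.ncard

/-- The clipping function `cl_k`: all mass at indices `≥ k` is moved to index `k`. -/
noncomputable def clip (k : ℕ) (v : ℕ → ℕ) : ℕ → ℕ :=
  fun i => if i < k then v i else if i = k then tailSum v k else 0

/-- The bound condition for a collection `γ` (accessed as `γ n' n` for `n ≤ n'`, `n' ≥ 1`):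
every `γ n' n` is a histogram in `V` (finitely supported); for every ReLU layer function
`h ∈ RL(n, n')` with `0 ≤ n ≤ n'` the activation histogram of its attained signatures is
dominated by `γ n' n` (for `n = 0` the layer functions are the constants, with activation
histogram `e_0`); and `γ n' n ≼ γ n' m` whenever `n ≤ m ≤ n'`. -/
def BoundCondition (γ : ℕ → ℕ → ℕ → ℕ) : Prop :=
  (∀ n' n : ℕ, 0 < n' → n ≤ n' → (Function.support (γ n' n)).Finite) ∧
  (∀ n' : ℕ, 0 < n' → hle (histE 0) (γ n' 0)) ∧
  (∀ n n' : ℕ, 0 < n → 0 < n' → n ≤ n' →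
    ∀ (W : Matrix (Fin n') (Fin n) ℝ) (b : Fin n' → ℝ),
      hle (actHist n' (Set.range (sig W b))) (γ n' n)) ∧
  (∀ n' n m : ℕ, 0 < n' → n ≤ m → m ≤ n' → hle (γ n' n) (γ n' m))

/-- The transition function `φ^{(γ)}_{n'} : V → V`,
`v ↦ ∑_{m} v_m · cl_{min(m,n')}(γ_{min(m,n'), n'})`. -/
noncomputable def phi (γ : ℕ → ℕ → ℕ → ℕ) (n' : ℕ) (v : ℕ → ℕ) : ℕ → ℕ :=
  fun i => ∑' m : ℕ, v m * clip (min m n') (γ n' (min m n')) i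

/-- The dimension histogram `H̃^{(i)}(U)`: entry `j` counts the length-`i` multi signatures
`(s_1, …, s_i) ∈ U` with `min(n_0, |s_1|, …, |s_i|) = j`. -/
noncomputable def dimHist (n : ℕ → ℕ) (i : ℕ)
    (U : Set (∀ l : Fin i, Fin (n (l.val + 1)) → Bool)) : ℕ → ℕ :=
  fun j => {u ∈ U | minAct n i u = j}.ncard


/-- The binomial collection `γ̃_{n,n'} = ∑_{j=0}^{n} C(n', j) e_{n'-j}`
(accessed as `binomGamma n' n`). -/
def binomGamma (n' n : ℕ) : ℕ → ℕ :=
  fun i => ∑ j ∈ Finset.range (n + 1), if i = n' - j then n'.choose j else 0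

section Aux

open Finset

lemma tailSum_eq_sum {v : ℕ → ℕ} {N : ℕ} (hv : ∀ j, N ≤ j → v j = 0) (J : ℕ) :
    tailSum v J = ∑ j ∈ range N, if J ≤ j then v j else 0 := by
  unfold tailSum
  refine tsum_eq_sum ?_
  intro j hj
  have hN : N ≤ j := le_of_not_gt (by simpa using hj)
  simp [hv j hN]

lemma cnt_le {k : ℕ} (s : Fin k → Bool) : cnt s ≤ k := by
  classical
  simpa [cnt] using Finset.card_filter_le (univ : Finset (Fin k)) (fun j => s j = true)

lemma binomGamma_zero {n' n i : ℕ} (h : n' + 1 ≤ i) : binomGamma n' n i = 0 := by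
  unfold binomGamma
  refine Finset.sum_eq_zero fun j _ => ?_
  rw [if_neg]; omega

lemma tailSum_binomGamma (n' n J : ℕ) :
    tailSum (binomGamma n' n) J
      = ∑ j ∈ range (n + 1), if J ≤ n' - j then n'.choose j else 0 := by
  rw [tailSum_eq_sum (N := n' + 1) (fun j hj => binomGamma_zero hj) J]
  have h1 : ∀ i, (if J ≤ i then binomGamma n' n i else 0)
      = ∑ j ∈ range (n + 1), if i = n' - j ∧ J ≤ i then n'.choose j else 0 := by
    intro i
    by_cases h : J ≤ i
    · simp only [if_pos h, binomGamma]
      refine Finset.sum_congr rfl fun j _ => ?_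
      by_cases h2 : i = n' - j
      · subst h2; simp [h]
      · simp [h2]
    · rw [if_neg h]
      symm
      refine Finset.sum_eq_zero fun j _ => ?_
      rw [if_neg]; tauto
  simp only [h1]
  rw [Finset.sum_comm]
  refine Finset.sum_congr rfl fun j _ => ?_
  rw [Finset.sum_eq_single (n' - j)]
  · by_cases h : J ≤ n' - j <;> simp [h]
  · intro i _ hne
    rw [if_neg]; tauto
  · intro h
    exact absurd (Finset.mem_range.2 (by omega)) h

lemma no_shatter {n n' : ℕ} (W : Matrix (Fin n') (Fin n) ℝ) (b : Fin n' → ℝ)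
    (t : Finset (Fin n')) (hcard : t.card = n + 1)
    (hsh : ∀ u ⊆ t, ∃ x : Fin n → ℝ, ∀ i ∈ t, (0 < W i ⬝ᵥ x + b i ↔ i ∈ u)) : False := by
  classical
  have hni : ¬ LinearIndependent ℝ (fun i : ↥t => W i) := by
    intro h
    have h2 := h.fintype_card_le_finrank
    rw [Module.finrank_fin_fun, Fintype.card_coe, hcard] at h2
    omega
  obtain ⟨g, hg, i0, hi0⟩ := Fintype.not_linearIndependent_iff.1 hni
  set c : Fin n' → ℝ := fun i => if h : i ∈ t then g ⟨i, h⟩ else 0 with hc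
  have hci : ∀ i : ↥t, c ↑i = g i := by
    intro i
    simp [hc, i.2]
  have hc0 : ∑ i ∈ t, c i • W i = 0 := by
    calc ∑ i ∈ t, c i • W i = ∑ i : ↥t, c ↑i • W ↑i := (Finset.sum_coe_sort t _).symm
      _ = ∑ i : ↥t, g i • W ↑i := Finset.sum_congr rfl fun i _ => by rw [hci]
      _ = 0 := hg
  set r : ℝ := ∑ i ∈ t, c i * b i with hr
  have key : ∀ x : Fin n → ℝ, ∑ i ∈ t, c i * (W i ⬝ᵥ x + b i) = r := by
    intro x
    have h1 : ∑ i ∈ t, c i * (W i ⬝ᵥ x) = (∑ i ∈ t, c i • W i) ⬝ᵥ x := by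
      simp only [dotProduct, Finset.sum_apply, Pi.smul_apply, smul_eq_mul,
        Finset.mul_sum, Finset.sum_mul, mul_assoc]
      exact Finset.sum_comm
    simp only [mul_add, Finset.sum_add_distrib, h1, hc0, zero_dotProduct,
      Pi.zero_apply, zero_add, hr]
  have hex : c ↑i0 ≠ 0 := by rw [hci]; exact hi0
  set j0 : Fin n' := ↑i0 with hj0
  have hj0t : j0 ∈ t := i0.2
  have pos_pattern : ∀ x : Fin n → ℝ,
      (∀ i ∈ t, (0 < W i ⬝ᵥ x + b i ↔ i ∈ t.filter fun i => 0 < c i)) →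
      (∀ i ∈ t, 0 ≤ c i * (W i ⬝ᵥ x + b i)) := by
    intro x hx i hi
    have hxi := hx i hi
    by_cases hcip : 0 < c i
    · have hyi : 0 < W i ⬝ᵥ x + b i := hxi.2 (Finset.mem_filter.2 ⟨hi, hcip⟩)
      exact le_of_lt (mul_pos hcip hyi)
    · push_neg at hcip
      have hyi : ¬ (0 < W i ⬝ᵥ x + b i) := by
        intro h
        exact absurd (Finset.mem_filter.1 (hxi.1 h)).2 (not_lt.2 hcip)
      push_neg at hyi
      exact mul_nonneg_iff.2 (Or.inr ⟨hcip, hyi⟩)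
  have neg_pattern : ∀ x : Fin n → ℝ,
      (∀ i ∈ t, (0 < W i ⬝ᵥ x + b i ↔ i ∈ t.filter fun i => c i < 0)) →
      (∀ i ∈ t, c i * (W i ⬝ᵥ x + b i) ≤ 0) := by
    intro x hx i hi
    have hxi := hx i hi
    by_cases hcip : c i < 0
    · have hyi : 0 < W i ⬝ᵥ x + b i := hxi.2 (Finset.mem_filter.2 ⟨hi, hcip⟩)
      exact le_of_lt (mul_neg_of_neg_of_pos hcip hyi)
    · push_neg at hcip
      have hyi : ¬ (0 < W i ⬝ᵥ x + b i) := by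
        intro h
        exact absurd (Finset.mem_filter.1 (hxi.1 h)).2 (not_lt.2 hcip)
      push_neg at hyi
      exact mul_nonpos_iff.2 (Or.inl ⟨hcip, hyi⟩)
  rcases lt_trichotomy r 0 with hrs | hrs | hrs
  · obtain ⟨x, hx⟩ := hsh (t.filter fun i => 0 < c i) (Finset.filter_subset _ _)
    have h0 : (0:ℝ) ≤ ∑ i ∈ t, c i * (W i ⬝ᵥ x + b i) :=
      Finset.sum_nonneg (pos_pattern x hx)
    rw [key x] at h0
    linarith
  · rcases lt_or_gt_of_ne hex with hneg | hpos
    · obtain ⟨x, hx⟩ := hsh (t.filter fun i => c i < 0) (Finset.filter_subset _ _)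
      have h0 : ∑ i ∈ t, c i * (W i ⬝ᵥ x + b i) < 0 := by
        refine Finset.sum_neg' (neg_pattern x hx) ⟨j0, hj0t, ?_⟩
        have hyi : 0 < W j0 ⬝ᵥ x + b j0 :=
          (hx j0 hj0t).2 (Finset.mem_filter.2 ⟨hj0t, hneg⟩)
        exact mul_neg_of_neg_of_pos hneg hyi
      rw [key x] at h0
      linarith
    · obtain ⟨x, hx⟩ := hsh (t.filter fun i => 0 < c i) (Finset.filter_subset _ _)
      have h0 : 0 < ∑ i ∈ t, c i * (W i ⬝ᵥ x + b i) := by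
        refine Finset.sum_pos' (pos_pattern x hx) ⟨j0, hj0t, ?_⟩
        have hyi : 0 < W j0 ⬝ᵥ x + b j0 :=
          (hx j0 hj0t).2 (Finset.mem_filter.2 ⟨hj0t, hpos⟩)
        exact mul_pos hpos hyi
      rw [key x] at h0
      linarith
  · obtain ⟨x, hx⟩ := hsh (t.filter fun i => c i < 0) (Finset.filter_subset _ _)
    have h0 : ∑ i ∈ t, c i * (W i ⬝ᵥ x + b i) ≤ 0 :=
      Finset.sum_nonpos (neg_pattern x hx)
    rw [key x] at h0
    linarith

lemma sauer_bound {n n' : ℕ} (W : Matrix (Fin n') (Fin n) ℝ) (b : Fin n' → ℝ)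
    (Sfin : Finset (Fin n' → Bool)) (hS : ∀ s ∈ Sfin, ∃ x, sig W b x = s) :
    Sfin.card ≤ ∑ j ∈ range (n + 1), n'.choose j := by
  classical
  set F : (Fin n' → Bool) → Finset (Fin n') :=
    fun s => univ.filter (fun i => s i = true) with hF
  have hFinj : Function.Injective F := by
    intro s s' h
    funext i
    have h2 := Finset.ext_iff.1 h i
    simp only [hF, Finset.mem_filter, Finset.mem_univ, true_and] at h2
    cases hs : s i <;> cases hs' : s' i <;> simp_all
  set 𝒜 : Finset (Finset (Fin n')) := Sfin.image F with h𝒜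
  have hvc : 𝒜.vcDim ≤ n := by
    refine Finset.sup_le fun t ht => ?_
    by_contra hlt
    push_neg at hlt
    obtain ⟨t', ht't, hcard⟩ := Finset.exists_subset_card_eq (show n + 1 ≤ t.card from hlt)
    have hsh : 𝒜.Shatters t' := (Finset.mem_shatterer.1 ht).mono_right ht't
    refine no_shatter W b t' hcard fun u hu => ?_
    obtain ⟨a, ha, hta⟩ := hsh hu
    obtain ⟨s, hsS, rfl⟩ := Finset.mem_image.1 ha
    obtain ⟨x, rfl⟩ := hS s hsS
    refine ⟨x, fun i hi => ?_⟩
    constructor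
    · intro h
      rw [← hta]
      refine Finset.mem_inter.2 ⟨hi, ?_⟩
      simp [hF, sig, h]
    · intro h
      rw [← hta] at h
      have h2 := (Finset.mem_inter.1 h).2
      simp only [hF, Finset.mem_filter, Finset.mem_univ, true_and, sig,
        decide_eq_true_eq] at h2
      exact h2
  have h1 : Sfin.card = 𝒜.card := (Finset.card_image_of_injective _ hFinj).symm
  have h2 : 𝒜.card ≤ 𝒜.shatterer.card := Finset.card_le_card_shatterer 𝒜
  have h3 : 𝒜.shatterer.card ≤ ∑ k ∈ Finset.Iic 𝒜.vcDim, n'.choose k := by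
    simpa using Finset.card_shatterer_le_sum_vcDim (𝒜 := 𝒜)
  have h4 : ∑ k ∈ Finset.Iic 𝒜.vcDim, n'.choose k ≤ ∑ k ∈ Finset.Iic n, n'.choose k :=
    Finset.sum_le_sum_of_subset (Finset.Iic_subset_Iic.2 hvc)
  have h5 : Finset.Iic n = range (n + 1) := by
    ext k; simp [Nat.lt_succ_iff]
  rw [h5] at h4
  omega

lemma count_bound (n' J : ℕ) :
    (Finset.univ.filter fun s : Fin n' → Bool => J ≤ cnt s).card
      ≤ ∑ m ∈ Finset.Icc J n', n'.choose m := by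
  classical
  set F : (Fin n' → Bool) → Finset (Fin n') :=
    fun s => univ.filter (fun i => s i = true) with hF
  have hFinj : Function.Injective F := by
    intro s s' h
    funext i
    have h2 := Finset.ext_iff.1 h i
    simp only [hF, Finset.mem_filter, Finset.mem_univ, true_and] at h2
    cases hs : s i <;> cases hs' : s' i <;> simp_all
  have himg : (Finset.univ.filter fun s : Fin n' → Bool => J ≤ cnt s).image F
      ⊆ (Finset.Icc J n').biUnion fun m => Finset.univ.powersetCard m := by
    intro a ha
    simp only [Finset.mem_image, Finset.mem_filter, Finset.mem_univ, true_and] at ha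
    obtain ⟨s, hs, rfl⟩ := ha
    refine Finset.mem_biUnion.2 ⟨cnt s, Finset.mem_Icc.2 ⟨hs, cnt_le s⟩, ?_⟩
    rw [Finset.mem_powersetCard_univ]
    simp [hF, cnt]
  calc (Finset.univ.filter fun s : Fin n' → Bool => J ≤ cnt s).card
      = ((Finset.univ.filter fun s : Fin n' → Bool => J ≤ cnt s).image F).card :=
        (Finset.card_image_of_injective _ hFinj).symm
    _ ≤ ((Finset.Icc J n').biUnion fun m => Finset.univ.powersetCard m).card :=
        Finset.card_le_card himg
    _ ≤ ∑ m ∈ Finset.Icc J n', (Finset.univ.powersetCard m).card :=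
        Finset.card_biUnion_le
    _ = ∑ m ∈ Finset.Icc J n', n'.choose m := by
        refine Finset.sum_congr rfl fun m _ => ?_
        simp [Finset.card_powersetCard]

end Aux

/-- The binomial collection `γ̃` satisfies the bound condition, i.e. `γ̃ ∈ Γ`. -/
theorem stmt16 : BoundCondition binomGamma := by
  classical
  refine ⟨?_, ?_, ?_, ?_⟩
  · intro n' n _ _
    refine Set.Finite.subset (Set.finite_Iio (n' + 1)) ?_
    intro i hi
    simp only [Function.mem_support] at hi
    simp only [Set.mem_Iio]
    by_contra h
    exact hi (binomGamma_zero (by omega))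
  · intro n' hn' J
    rw [tailSum_binomGamma,
      tailSum_eq_sum (N := 1) (v := histE 0) (fun j hj => by simp [histE]; omega) J]
    simp only [Finset.sum_range_one, Nat.sub_zero, Nat.choose_zero_right, histE,
      if_pos rfl]
    by_cases h : J = 0
    · subst h; simp
    · simp [h]
  · intro n n' hn hn' hnn' W b J
    set S := Set.range (sig W b) with hS
    have hsupp : ∀ j, n' + 1 ≤ j → actHist n' S j = 0 := by
      intro j hj
      unfold actHist
      have he : {s ∈ S | cnt s = j} = ∅ := by
        ext s
        simp only [Set.mem_setOf_eq, Set.mem_empty_iff_false, iff_false, not_and]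
        intro _ h
        have := cnt_le s
        omega
      rw [he, Set.ncard_empty]
    have hact : ∀ j, actHist n' S j
        = (Finset.univ.filter fun s => s ∈ S ∧ cnt s = j).card := by
      intro j
      unfold actHist
      rw [show {s ∈ S | cnt s = j}
          = ↑(Finset.univ.filter fun s => s ∈ S ∧ cnt s = j) by ext s; simp]
      exact Set.ncard_coe_finset _
    set A : Finset (Fin n' → Bool) :=
      Finset.univ.filter (fun s => s ∈ S ∧ J ≤ cnt s) with hA
    have hL : tailSum (actHist n' S) J = A.card := by
      rw [tailSum_eq_sum hsupp J,
        Finset.card_eq_sum_card_fiberwise (f := cnt) (t := Finset.range (n' + 1))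
          (fun s _ => Finset.mem_range.2 (by have := cnt_le s; omega))]
      refine Finset.sum_congr rfl fun j _ => ?_
      by_cases h : J ≤ j
      · rw [if_pos h, hact j]
        congr 1
        ext s
        simp only [hA, Finset.mem_filter, Finset.mem_univ, true_and]
        constructor
        · rintro ⟨h1, h2⟩; exact ⟨⟨h1, by omega⟩, h2⟩
        · rintro ⟨⟨h1, _⟩, h2⟩; exact ⟨h1, h2⟩
      · rw [if_neg h]
        symm
        rw [Finset.card_eq_zero, Finset.eq_empty_iff_forall_notMem]
        intro s hs
        simp only [hA, Finset.mem_filter, Finset.mem_univ, true_and] at hs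
        omega
    rw [hL, tailSum_binomGamma]
    by_cases hcase : n + J ≤ n'
    · have hA1 : A.card ≤ (Finset.univ.filter fun s => s ∈ S).card :=
        Finset.card_le_card (fun s hs => by
          simp only [hA, Finset.mem_filter] at hs ⊢
          exact ⟨hs.1, hs.2.1⟩)
      have hA2 : (Finset.univ.filter fun s => s ∈ S).card
          ≤ ∑ j ∈ Finset.range (n + 1), n'.choose j :=
        sauer_bound W b _ (fun s hs => by
          simpa [hS] using (Finset.mem_filter.1 hs).2)
      have hR : ∑ j ∈ Finset.range (n + 1), (if J ≤ n' - j then n'.choose j else 0)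
          = ∑ j ∈ Finset.range (n + 1), n'.choose j := by
        refine Finset.sum_congr rfl fun j hj => ?_
        rw [if_pos]
        have := Finset.mem_range.1 hj
        omega
      omega
    · have hA1 : A.card ≤ (Finset.univ.filter fun s : Fin n' → Bool => J ≤ cnt s).card :=
        Finset.card_le_card (fun s hs => by
          simp only [hA, Finset.mem_filter] at hs ⊢
          exact ⟨hs.1, hs.2.2⟩)
      have hA2 := count_bound n' J
      have hbr : ∑ m ∈ Finset.Icc J n', n'.choose m
          = ∑ j ∈ (Finset.range (n + 1)).filter (fun j => J ≤ n' - j), n'.choose j := by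
        refine Finset.sum_nbij' (i := fun m => n' - m) (j := fun k => n' - k)
          ?_ ?_ ?_ ?_ ?_
        · intro m hm
          simp only [Finset.mem_Icc] at hm
          simp only [Finset.mem_filter, Finset.mem_range]
          omega
        · intro k hk
          simp only [Finset.mem_filter, Finset.mem_range] at hk
          simp only [Finset.mem_Icc]
          omega
        · intro m hm
          simp only [Finset.mem_Icc] at hm
          show n' - (n' - m) = m
          omega
        · intro k hk
          simp only [Finset.mem_filter, Finset.mem_range] at hk
          show n' - (n' - k) = k
          omega
        · intro m hm
          simp only [Finset.mem_Icc] at hm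
          exact (Nat.choose_symm hm.2).symm
      have hfil : ∑ j ∈ (Finset.range (n + 1)).filter (fun j => J ≤ n' - j), n'.choose j
          = ∑ j ∈ Finset.range (n + 1), (if J ≤ n' - j then n'.choose j else 0) :=
        Finset.sum_filter _ _
      omega
  · intro n' n m _ hnm _ J
    rw [tailSum_binomGamma, tailSum_binomGamma]
    apply Finset.sum_le_sum_of_subset
    exact Finset.range_subset_range.2 (by omega)
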